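/- arXiv:2403.13143 — 2 statements merged into one kernel-verified Lean document; each statement's English description precedes it below -/
import Mathlib

section
/- (Half of the Hahn–Katětov–Tong insertion theorem) For every upper semicontinuous function f : ℝ → ℝ there exists a continuous function g : ℝ → ℝ such that f(x) ≤ g(x) for all x ∈ ℝ. -/
/-- `f : ℝ → ℝ` is upper semicontinuous (epsilon-delta definition). -/
def Usco (f : ℝ → ℝ) : Prop :=
  ∀ x₀ : ℝ, ∀ ε > (0:ℝ), ∃ δ > (0:ℝ), ∀ y : ℝ, |y - x₀| < δ → f y < f x₀ + ε

theorem usco_dominated_by_continuous (f : ℝ → ℝ) (hf : Usco f) :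
    ∃ g : ℝ → ℝ, Continuous g ∧ ∀ x : ℝ, f x ≤ g x := by
  obtain ⟨g, hg⟩ := exists_continuous_forall_mem_convex_of_local_const
    (t := fun x => Set.Ici (f x)) (fun x => convex_Ici _) (fun x => by
      obtain ⟨δ, hδ, h⟩ := hf x 1 one_pos
      refine ⟨f x + 1, ?_⟩
      have : Metric.ball x δ ∈ nhds x := Metric.ball_mem_nhds x hδ
      filter_upwards [this] with y hy
      exact le_of_lt (h y (by simpa [Real.dist_eq] using hy)))
  exact ⟨g, g.continuous, fun x => hg x⟩
end

section
/- (Sequential Heine–Borel theorem, HBC_s^seq) Let (O_{n,m})_{n,m∈ℕ} be a double sequence of open subsets of ℝ and let (Cₙ)ₙ∈ℕ be a sequence of closed subsets of [0,1] such that Cₙ ⊆ ⋃_{m∈ℕ} O_{n,m} for every n ∈ ℕ. Then there exists g : ℕ → ℕ such that for all n ∈ ℕ, Cₙ ⊆ ⋃_{m ≤ g(n)} O_{n,m}. -/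
theorem sequential_heine_borel (O : ℕ → ℕ → Set ℝ) (C : ℕ → Set ℝ)
    (hO : ∀ n m, IsOpen (O n m))
    (hC : ∀ n, IsClosed (C n))
    (hC1 : ∀ n, C n ⊆ Set.Icc (0:ℝ) 1)
    (hcov : ∀ n, C n ⊆ ⋃ m, O n m) :
    ∃ g : ℕ → ℕ, ∀ n : ℕ, C n ⊆ ⋃ m ≤ g n, O n m := by
  have key : ∀ n, ∃ k : ℕ, C n ⊆ ⋃ m ≤ k, O n m := by
    intro n
    have hcomp : IsCompact (C n) :=
      (isCompact_Icc.of_isClosed_subset (hC n) (hC1 n))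
    obtain ⟨t, ht⟩ := hcomp.elim_finite_subcover (O n) (hO n) (hcov n)
    refine ⟨t.sup id, ht.trans ?_⟩
    intro x hx
    simp only [Set.mem_iUnion] at hx ⊢
    obtain ⟨m, hm, hxm⟩ := hx
    exact ⟨m, Finset.le_sup (f := id) hm, hxm⟩
  choose g hg using key
  exact ⟨g, hg⟩
end
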